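/- Let L : ℝⁿ × ℝⁿ → ℝ be twice continuously differentiable with M(x,v) = ∂²_{vv}L(x,v) and f(x,v) = ∂_x(∂_v L)(x,v) · v − ∂_x L(x,v), let h : ℝⁿ × ℝⁿ → ℝⁿ be continuous, and suppose M(x,v) is positive definite whenever v ≠ 0. If x : ℝ → ℝⁿ is a twice continuously differentiable curve with ẋ(t) ≠ 0 for all t satisfying the energized equation ẍ(t) + h(x(t), ẋ(t)) + α(x(t), ẋ(t)) ẋ(t) = 0, where α(x,v) = −(vᵀ M(x,v) v)⁻¹ vᵀ (M(x,v) h(x,v) − f(x,v)), then the energy H(t) = ⟨∂_v L(x(t), ẋ(t)), ẋ(t)⟩ − L(x(t), ẋ(t)) is constant in t. -/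

import Mathlib

open RealInnerProductSpace

noncomputable section

/-- The gradient of `L` in its velocity argument: `∂_v L(x, v)`. -/
def gradV {n : ℕ} (L : EuclideanSpace ℝ (Fin n) × EuclideanSpace ℝ (Fin n) → ℝ)
    (x v : EuclideanSpace ℝ (Fin n)) : EuclideanSpace ℝ (Fin n) :=
  gradient (fun w => L (x, w)) v

/-- The gradient of `L` in its position argument: `∂_x L(x, v)`. -/
def gradX {n : ℕ} (L : EuclideanSpace ℝ (Fin n) × EuclideanSpace ℝ (Fin n) → ℝ)
    (x v : EuclideanSpace ℝ (Fin n)) : EuclideanSpace ℝ (Fin n) :=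
  gradient (fun y => L (y, v)) x

/-- The metric `M(x,v) = ∂²_{vv} L(x,v)`, as a (continuous linear) operator. -/
def Mop {n : ℕ} (L : EuclideanSpace ℝ (Fin n) × EuclideanSpace ℝ (Fin n) → ℝ)
    (x v : EuclideanSpace ℝ (Fin n)) :
    EuclideanSpace ℝ (Fin n) →L[ℝ] EuclideanSpace ℝ (Fin n) :=
  fderiv ℝ (fun u => gradV L x u) v

/-- The Euler–Lagrange force term `f(x,v) = ∂_x(∂_v L)(x,v) · v − ∂_x L(x,v)`. -/
def fEL {n : ℕ} (L : EuclideanSpace ℝ (Fin n) × EuclideanSpace ℝ (Fin n) → ℝ)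
    (x v : EuclideanSpace ℝ (Fin n)) : EuclideanSpace ℝ (Fin n) :=
  (fderiv ℝ (fun y => gradV L y v) x) v - gradX L x v

/-- The Hamiltonian (energy) `H(x,v) = ⟨∂_v L(x,v), v⟩ − L(x,v)`. -/
def Ham {n : ℕ} (L : EuclideanSpace ℝ (Fin n) × EuclideanSpace ℝ (Fin n) → ℝ)
    (x v : EuclideanSpace ℝ (Fin n)) : ℝ :=
  ⟪gradV L x v, v⟫ - L (x, v)

/-- The energization coefficient
`α(x,v) = −(vᵀ M(x,v) v)⁻¹ vᵀ (M(x,v) h(x,v) − f(x,v))`. -/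
def alphaCoef {n : ℕ} (L : EuclideanSpace ℝ (Fin n) × EuclideanSpace ℝ (Fin n) → ℝ)
    (h : EuclideanSpace ℝ (Fin n) × EuclideanSpace ℝ (Fin n) → EuclideanSpace ℝ (Fin n))
    (x v : EuclideanSpace ℝ (Fin n)) : ℝ :=
  -(⟪v, Mop L x v v⟫)⁻¹ * ⟪v, Mop L x v (h (x, v)) - fEL L x v⟫

section Aux

variable {n : ℕ}

local notation "E" => EuclideanSpace ℝ (Fin n)

lemma hasFDerivAt_partial_fst' {G : Type*} [NormedAddCommGroup G] [NormedSpace ℝ G]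
    {f : E × E → G} {p : E × E} (hf : DifferentiableAt ℝ f p) :
    HasFDerivAt (fun y => f (y, p.2)) ((fderiv ℝ f p).comp (ContinuousLinearMap.inl ℝ E E)) p.1 :=
  hf.hasFDerivAt.comp p.1 (hasFDerivAt_prodMk_left p.1 p.2)

lemma hasFDerivAt_partial_snd' {G : Type*} [NormedAddCommGroup G] [NormedSpace ℝ G]
    {f : E × E → G} {p : E × E} (hf : DifferentiableAt ℝ f p) :
    HasFDerivAt (fun u => f (p.1, u)) ((fderiv ℝ f p).comp (ContinuousLinearMap.inr ℝ E E)) p.2 :=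
  hf.hasFDerivAt.comp p.2 (hasFDerivAt_prodMk_right p.1 p.2)

lemma gradV_eq' (L : E × E → ℝ) (hL : ContDiff ℝ 2 L) (x v : E) :
    gradV L x v = (InnerProductSpace.toDual ℝ E).symm
      ((fderiv ℝ L (x, v)).comp (ContinuousLinearMap.inr ℝ E E)) := by
  have hd : DifferentiableAt ℝ L (x, v) := (hL.differentiable (by norm_num)).differentiableAt
  have h1 : HasFDerivAt (fun w => L (x, w))
      ((fderiv ℝ L (x, v)).comp (ContinuousLinearMap.inr ℝ E E)) v :=
    hd.hasFDerivAt.comp v (hasFDerivAt_prodMk_right x v)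
  rw [gradV, gradient, h1.fderiv]

lemma contDiff_gradV' (L : E × E → ℝ) (hL : ContDiff ℝ 2 L) :
    ContDiff ℝ 1 (fun p : E × E => gradV L p.1 p.2) := by
  have h1 : ContDiff ℝ 1 (fderiv ℝ L) := hL.fderiv_right (by norm_num)
  have h2 : ContDiff ℝ 1 (fun p : E × E => (InnerProductSpace.toDual ℝ E).symm
      ((fderiv ℝ L p).comp (ContinuousLinearMap.inr ℝ E E))) := by
    have hΨ : ContDiff ℝ 1 (fun g : (E × E) →L[ℝ] ℝ =>
        ((ContinuousLinearMap.compL ℝ E (E × E) ℝ).flip (ContinuousLinearMap.inr ℝ E E)) g) :=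
      (((ContinuousLinearMap.compL ℝ E (E × E) ℝ).flip
        (ContinuousLinearMap.inr ℝ E E)).contDiff).of_le le_top
    exact (((InnerProductSpace.toDual ℝ E).symm.contDiff).of_le le_top).comp (hΨ.comp h1)
  convert h2 using 2 with p
  exact gradV_eq' L hL p.1 p.2

end Aux

/-- system energization: if `x` satisfies the energized equation
`ẍ + h(x,ẋ) + α(x,ẋ) ẋ = 0` with the energization coefficient `α`, then the energy
`H(t) = ⟨∂_v L(x,ẋ), ẋ⟩ − L(x,ẋ)` is constant in `t`. -/
theorem energized_system_conserves_energy {n : ℕ}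
    (L : EuclideanSpace ℝ (Fin n) × EuclideanSpace ℝ (Fin n) → ℝ)
    (hL : ContDiff ℝ 2 L)
    (h : EuclideanSpace ℝ (Fin n) × EuclideanSpace ℝ (Fin n) → EuclideanSpace ℝ (Fin n))
    (hh : Continuous h)
    (hMpd : ∀ (x v : EuclideanSpace ℝ (Fin n)), v ≠ 0 →
      ∀ w : EuclideanSpace ℝ (Fin n), w ≠ 0 → 0 < ⟪w, Mop L x v w⟫)
    (x : ℝ → EuclideanSpace ℝ (Fin n)) (hx : ContDiff ℝ 2 x)
    (hv : ∀ t : ℝ, deriv x t ≠ 0)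
    (heq : ∀ t : ℝ,
      deriv (deriv x) t + h (x t, deriv x t)
        + alphaCoef L h (x t) (deriv x t) • deriv x t = 0) :
    ∀ t s : ℝ, Ham L (x t) (deriv x t) = Ham L (x s) (deriv x s) := by
  have hG : ContDiff ℝ 1
      (fun p : EuclideanSpace ℝ (Fin n) × EuclideanSpace ℝ (Fin n) => gradV L p.1 p.2) :=
    contDiff_gradV' L hL
  have hxd : Differentiable ℝ x := hx.differentiable (by norm_num)
  have hvC : ContDiff ℝ 1 (deriv x) := by
    have h2 : (2 : WithTop ℕ∞) = 1 + 1 := by norm_num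
    rw [h2, contDiff_succ_iff_deriv] at hx
    exact hx.2.2
  have hvd : Differentiable ℝ (deriv x) := hvC.differentiable (by norm_num)
  have key : ∀ t : ℝ, HasDerivAt (fun t => Ham L (x t) (deriv x t)) 0 t := by
    intro t
    -- abbreviations
    have hc : HasDerivAt (fun t => (x t, deriv x t)) (deriv x t, deriv (deriv x) t) t :=
      (hxd t).hasDerivAt.prodMk ((hvd t).hasDerivAt)
    have hGd : DifferentiableAt ℝ
        (fun p : EuclideanSpace ℝ (Fin n) × EuclideanSpace ℝ (Fin n) => gradV L p.1 p.2)
        (x t, deriv x t) := (hG.differentiable (by norm_num)) _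
    have hLd : DifferentiableAt ℝ L (x t, deriv x t) :=
      (hL.differentiable (by norm_num)) _
    set G : EuclideanSpace ℝ (Fin n) × EuclideanSpace ℝ (Fin n) → EuclideanSpace ℝ (Fin n) :=
      fun p => gradV L p.1 p.2 with hGdef
    set G' := fderiv ℝ G (x t, deriv x t) with hG'def
    set L' := fderiv ℝ L (x t, deriv x t) with hL'def
    -- derivative of t ↦ gradV L (x t) (ẋ t)
    have hGc : HasDerivAt (fun t => gradV L (x t) (deriv x t))
        (G' (deriv x t, deriv (deriv x) t)) t := by
      have := hGd.hasFDerivAt.comp_hasDerivAt t hc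
      exact this
    -- derivative of t ↦ L (x t, ẋ t)
    have hLc : HasDerivAt (fun t => L (x t, deriv x t))
        (L' (deriv x t, deriv (deriv x) t)) t := by
      have := hLd.hasFDerivAt.comp_hasDerivAt t hc
      exact this
    -- derivative of the inner-product part
    have hIc : HasDerivAt (fun t => ⟪gradV L (x t) (deriv x t), deriv x t⟫)
        (⟪gradV L (x t) (deriv x t), deriv (deriv x) t⟫
          + ⟪G' (deriv x t, deriv (deriv x) t), deriv x t⟫) t :=
      hGc.inner ℝ ((hvd t).hasDerivAt)
    have hHc : HasDerivAt (fun t => Ham L (x t) (deriv x t))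
        ((⟪gradV L (x t) (deriv x t), deriv (deriv x) t⟫
          + ⟪G' (deriv x t, deriv (deriv x) t), deriv x t⟫)
          - L' (deriv x t, deriv (deriv x) t)) t := by
      have := hIc.sub hLc
      exact this
    -- identify the pieces
    have hA : HasFDerivAt (fun y => gradV L y (deriv x t))
        (G'.comp (ContinuousLinearMap.inl ℝ _ _)) (x t) := hasFDerivAt_partial_fst' hGd
    have hM : HasFDerivAt (fun u => gradV L (x t) u)
        (G'.comp (ContinuousLinearMap.inr ℝ _ _)) (deriv x t) := hasFDerivAt_partial_snd' hGd
    have hMop : Mop L (x t) (deriv x t) = G'.comp (ContinuousLinearMap.inr ℝ _ _) := by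
      rw [Mop, hM.fderiv]
    have hfEL : fEL L (x t) (deriv x t)
        = (G'.comp (ContinuousLinearMap.inl ℝ _ _)) (deriv x t) - gradX L (x t) (deriv x t) := by
      rw [fEL, hA.fderiv]
    have hGsplit : G' (deriv x t, deriv (deriv x) t)
        = (G'.comp (ContinuousLinearMap.inl ℝ _ _)) (deriv x t)
          + (G'.comp (ContinuousLinearMap.inr ℝ _ _)) (deriv (deriv x) t) := by
      have : (deriv x t, deriv (deriv x) t)
          = ((deriv x t, 0) : EuclideanSpace ℝ (Fin n) × EuclideanSpace ℝ (Fin n)) + (0, deriv (deriv x) t) := by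
        simp
      rw [this, map_add]
      rfl
    -- identify L' pieces via gradX/gradV
    have hAx : HasFDerivAt (fun y => L (y, deriv x t))
        (L'.comp (ContinuousLinearMap.inl ℝ _ _)) (x t) := hasFDerivAt_partial_fst' hLd
    have hAv : HasFDerivAt (fun u => L (x t, u))
        (L'.comp (ContinuousLinearMap.inr ℝ _ _)) (deriv x t) := hasFDerivAt_partial_snd' hLd
    have hLsplit : L' (deriv x t, deriv (deriv x) t)
        = ⟪gradX L (x t) (deriv x t), deriv x t⟫
          + ⟪gradV L (x t) (deriv x t), deriv (deriv x) t⟫ := by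
      have e1 : ⟪gradX L (x t) (deriv x t), deriv x t⟫
          = (L'.comp (ContinuousLinearMap.inl ℝ _ _)) (deriv x t) := by
        rw [gradX, gradient, hAx.fderiv, InnerProductSpace.toDual_symm_apply]
      have e2 : ⟪gradV L (x t) (deriv x t), deriv (deriv x) t⟫
          = (L'.comp (ContinuousLinearMap.inr ℝ _ _)) (deriv (deriv x) t) := by
        rw [gradV, gradient, hAv.fderiv, InnerProductSpace.toDual_symm_apply]
      have e0 : (deriv x t, deriv (deriv x) t)
          = ((deriv x t, 0) : EuclideanSpace ℝ (Fin n) × EuclideanSpace ℝ (Fin n))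
            + (0, deriv (deriv x) t) := by simp
      rw [e0, map_add, e1, e2]
      rfl
    -- the acceleration from the energized equation
    have ha : deriv (deriv x) t
        = -(h (x t, deriv x t)) - alphaCoef L h (x t) (deriv x t) • deriv x t := by
      have h0 := heq t
      have h1 : deriv (deriv x) t
          + (h (x t, deriv x t) + alphaCoef L h (x t) (deriv x t) • deriv x t) = 0 := by
        rw [← add_assoc]; exact h0
      rw [add_eq_zero_iff_eq_neg] at h1
      rw [h1]; abel
    -- positivity
    have hbne : ⟪deriv x t, Mop L (x t) (deriv x t) (deriv x t)⟫ ≠ 0 :=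
      ne_of_gt (hMpd (x t) (deriv x t) (hv t) (deriv x t) (hv t))
    -- show the derivative is zero
    have hD : (⟪gradV L (x t) (deriv x t), deriv (deriv x) t⟫
          + ⟪G' (deriv x t, deriv (deriv x) t), deriv x t⟫)
          - L' (deriv x t, deriv (deriv x) t) = 0 := by
      rw [hGsplit, hLsplit]
      have hAvt : (G'.comp (ContinuousLinearMap.inl ℝ _ _)) (deriv x t)
          = fEL L (x t) (deriv x t) + gradX L (x t) (deriv x t) := by
        rw [hfEL]; abel
      rw [inner_add_left, hAvt, inner_add_left, ← hMop]
      -- now reduce to scalar algebra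
      have hMa : ⟪Mop L (x t) (deriv x t) (deriv (deriv x) t), deriv x t⟫
          = -⟪deriv x t, Mop L (x t) (deriv x t) (h (x t, deriv x t))⟫
            - alphaCoef L h (x t) (deriv x t) * ⟪deriv x t, Mop L (x t) (deriv x t) (deriv x t)⟫ := by
        rw [real_inner_comm, ha]
        simp [inner_sub_right, inner_smul_right, inner_neg_right, map_sub, map_neg, map_smul]
      rw [hMa]
      have halpha : alphaCoef L h (x t) (deriv x t)
            * ⟪deriv x t, Mop L (x t) (deriv x t) (deriv x t)⟫
          = -(⟪deriv x t, Mop L (x t) (deriv x t) (h (x t, deriv x t))⟫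
              - ⟪deriv x t, fEL L (x t) (deriv x t)⟫) := by
        rw [alphaCoef, inner_sub_right, neg_mul, neg_mul, mul_comm (⟪deriv x t,
          Mop L (x t) (deriv x t) (deriv x t)⟫)⁻¹, mul_assoc,
          inv_mul_cancel₀ hbne, mul_one]
      have hcomm : ⟪fEL L (x t) (deriv x t), deriv x t⟫
          = ⟪deriv x t, fEL L (x t) (deriv x t)⟫ := real_inner_comm _ _
      rw [halpha, hcomm]
      ring
    rw [hD] at hHc
    exact hHc
  intro t s
  exact is_const_of_deriv_eq_zero (fun u => (key u).differentiableAt) (fun u => (key u).deriv) t s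

end
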